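/- Let m ∈ ℕ and t := t_{m+1}. Let μ ∈ X be such that μ ≠ t(μ) and the untwisted Bruhat edge between μ and t(μ) is directed toward t(μ). Then the map ν ↦ t(ν) is a bijection from the set of in-neighbors of μ in Γ^m (i.e., the set of weights ν = μ − kβ with (β,k) ∈ Φ⁺ × (ℤ∖{0}) such that the edge between ν and μ is directed toward μ in Γ^m) onto the set of in-neighbors of t(μ) in Γ^m with the element μ removed. In particular, Arr_m(μ) + 1 = Arr_m(t(μ)). -/

import Mathlib

open scoped BigOperators

namespace TypeATwisted

/-- `ℤ^{n+1}`. -/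
abbrev V (n : ℕ) := Fin (n + 1) → ℤ

/-- The vector `(1,…,1)`. -/
def onesV (n : ℕ) : V n := fun _ => 1

/-- The subgroup `ℤ·(1,…,1)`. -/
def lineZ (n : ℕ) : AddSubgroup (V n) := AddSubgroup.zmultiples (onesV n)

/-- The weight lattice `X = ℤ^{n+1}/ℤ·(1,…,1)` of `SL_{n+1}`. -/
abbrev X (n : ℕ) := V n ⧸ lineZ n

/-- The quotient map `ℤ^{n+1} → X`. -/
def toX (n : ℕ) : V n →+ X n := QuotientAddGroup.mk' (lineZ n)

/-- The positive root `e_a − e_b` (for `a < b`) as a vector in `ℤ^{n+1}`. -/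
def posRootV (n : ℕ) (a b : Fin (n + 1)) : V n := Pi.single a 1 - Pi.single b 1

/-- The positive root `e_a − e_b` (for `a < b`) as an element of `X`. -/
def posRootX (n : ℕ) (a b : Fin (n + 1)) : X n := toX n (posRootV n a b)

/-- The pairing `μ ↦ μ_a − μ_b` on `ℤ^{n+1}`. -/
def pairV (n : ℕ) (a b : Fin (n + 1)) : V n →+ ℤ :=
  (Pi.evalAddMonoidHom (fun _ => ℤ) a) - (Pi.evalAddMonoidHom (fun _ => ℤ) b)

lemma pairV_ker (n : ℕ) (a b : Fin (n + 1)) : ∀ v ∈ lineZ n, pairV n a b v = 0 := by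
  intro v hv
  rw [lineZ, AddSubgroup.mem_zmultiples_iff] at hv
  obtain ⟨k, rfl⟩ := hv
  simp [pairV, onesV]

/-- The pairing `⟨μ, β^∨⟩ = μ_a − μ_b` for the positive root `β = e_a − e_b`,
well defined on `X`. -/
def pairX (n : ℕ) (a b : Fin (n + 1)) : X n →+ ℤ :=
  QuotientAddGroup.lift (lineZ n) (pairV n a b) (pairV_ker n a b)

/-- The root lattice `ℤΦ ⊆ X`. -/
def rootLattice (n : ℕ) : AddSubgroup (X n) :=
  AddSubgroup.closure {x | ∃ a b : Fin (n + 1), a < b ∧ x = posRootX n a b}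

/-- `μ ∈ X` is dominant if it has a weakly decreasing representative. -/
def IsDominant (n : ℕ) (μ : X n) : Prop := ∃ v : V n, Antitone v ∧ toX n v = μ

/-- `μ ≤ λ` iff `λ − μ ∈ ℤΦ` and `μ` lies in the convex hull of the `S_{n+1}`-orbit
of `λ` inside `ℝ^{n+1}/ℝ·(1,…,1)`. -/
def wle (n : ℕ) (μ lam : X n) : Prop :=
  lam - μ ∈ rootLattice n ∧
  ∃ u v : V n, toX n u = μ ∧ toX n v = lam ∧ ∃ c : ℝ,
    (fun i => (u i : ℝ) + c) ∈
      convexHull ℝ {w : Fin (n + 1) → ℝ |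
        ∃ σ : Equiv.Perm (Fin (n + 1)), w = fun i => (v (σ i) : ℝ)}

/-- The untwisted Bruhat edge between `μ − kβ` and `μ` points toward `μ`
(`β = e_a − e_b`, `a < b`, `k ≠ 0`): `⟨μ,β^∨⟩ ≥ k > 0` or `⟨μ,β^∨⟩ < k < 0`. -/
def edgeToward (n : ℕ) (a b : Fin (n + 1)) (k : ℤ) (μ : X n) : Prop :=
  (0 < k ∧ k ≤ pairX n a b μ) ∨ (k < 0 ∧ pairX n a b μ < k)

/-- The edge between `μ − kβ` and `μ` is `m`-twisted: `β = α_{j,n}` (i.e. `b` is the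
last index), and with `c := k − ⟨μ,β^∨⟩` one has `c ≥ 1` and `(c−1)·n + j ≤ m`,
where `j = a + 1` (`1`-based). -/
def IsTwisted (n : ℕ) (m : ℕ∞) (a b : Fin (n + 1)) (k : ℤ) (μ : X n) : Prop :=
  b = Fin.last n ∧ 1 ≤ k - pairX n a b μ ∧
  (((k - pairX n a b μ - 1).toNat * n + (a : ℕ) + 1 : ℕ) : ℕ∞) ≤ m

/-- In the `m`-twisted Bruhat graph `Γ^m`, the edge between `μ − kβ` and `μ` is directed
toward `μ` iff exactly one of `(μ−kβ) ◁ μ` and `m`-twistedness holds.  (`m = 0` gives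
the untwisted Bruhat graph.) -/
def dirToward (n : ℕ) (m : ℕ∞) (a b : Fin (n + 1)) (k : ℤ) (μ : X n) : Prop :=
  Xor' (edgeToward n a b k μ) (IsTwisted n m a b k μ)

/-- The edge between `ν` and `μ` is directed toward `μ` in `Γ^m`. -/
def EdgeDirToward (n : ℕ) (m : ℕ∞) (ν μ : X n) : Prop :=
  ∃ a b : Fin (n + 1), a < b ∧ ∃ k : ℤ, k ≠ 0 ∧
    ν = μ - k • posRootX n a b ∧ dirToward n m a b k μ

/-- `Arr_m(μ,λ)`: the number of pairs `(β,k) ∈ Φ⁺ × (ℤ∖{0})` with `μ − kβ ≤ λ` and the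
edge between `μ − kβ` and `μ` directed toward `μ` in `Γ^m`. -/
noncomputable def ArrRes (n : ℕ) (m : ℕ∞) (μ lam : X n) : ℕ :=
  {p : (Fin (n + 1) × Fin (n + 1)) × ℤ | p.1.1 < p.1.2 ∧ p.2 ≠ 0 ∧
    wle n (μ - p.2 • posRootX n p.1.1 p.1.2) lam ∧
    dirToward n m p.1.1 p.1.2 p.2 μ}.ncard

/-- `Arr_m(μ)`: the number of pairs `(β,k) ∈ Φ⁺ × (ℤ∖{0})` with the edge between
`μ − kβ` and `μ` directed toward `μ` in `Γ^m`. -/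
noncomputable def Arr (n : ℕ) (m : ℕ∞) (μ : X n) : ℕ :=
  {p : (Fin (n + 1) × Fin (n + 1)) × ℤ | p.1.1 < p.1.2 ∧ p.2 ≠ 0 ∧
    dirToward n m p.1.1 p.1.2 p.2 μ}.ncard

/-- The affine reflection `r_{β,c}(ν) = ν − (c + ⟨ν,β^∨⟩)·β` for `β = e_a − e_b`. -/
def areflect (n : ℕ) (a b : Fin (n + 1)) (c : ℤ) : X n → X n :=
  fun ν => ν - (c + pairX n a b ν) • posRootX n a b

/-- `ℓ^β(μ)`: `⟨μ,β^∨⟩` if `⟨μ,β^∨⟩ ≥ 0`, and `−⟨μ,β^∨⟩ − 1` otherwise. -/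
def ellBeta (n : ℕ) (a b : Fin (n + 1)) (μ : X n) : ℕ :=
  if 0 ≤ pairX n a b μ then (pairX n a b μ).toNat else (-(pairX n a b μ) - 1).toNat

end TypeATwisted

open TypeATwisted

section Aux

lemma pairX_toX (n : ℕ) (a b : Fin (n+1)) (v : V n) : pairX n a b (toX n v) = pairV n a b v := rfl

lemma pairX_posRootX (n : ℕ) (x y x' y' : Fin (n+1)) :
    pairX n x y (posRootX n x' y') =
      (if (x:ℕ) = (x':ℕ) then 1 else 0) - (if (x:ℕ) = (y':ℕ) then 1 else 0)
      - (if (y:ℕ) = (x':ℕ) then 1 else 0) + (if (y:ℕ) = (y':ℕ) then 1 else 0) := by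
  show pairV n x y (posRootV n x' y') = _
  simp [pairV, posRootV, Pi.single_apply, Fin.ext_iff]
  ring

lemma pairX_sub_smul (n : ℕ) (a b a' b' : Fin (n+1)) (ν : X n) (k : ℤ) :
    pairX n a b (ν - k • posRootX n a' b') =
      pairX n a b ν - k * pairX n a b (posRootX n a' b') := by
  rw [map_sub, map_zsmul, smul_eq_mul]

lemma posRootX_add (n : ℕ) (x y z : Fin (n+1)) :
    posRootX n x y + posRootX n y z = posRootX n x z := by
  unfold posRootX
  rw [← map_add]
  congr 1
  unfold posRootV
  abel

lemma height_le (nZ x cc j aa : ℤ) (hj1 : 1 ≤ j) (hjn : j ≤ nZ) (ha0 : 0 ≤ aa) (han : aa < nZ) :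
    (x - 1) * nZ + j ≤ (cc - 1) * nZ + aa ↔ (x < cc ∨ (x = cc ∧ j ≤ aa)) := by
  constructor
  · intro h
    rcases lt_trichotomy x cc with h1 | h1 | h1
    · exact Or.inl h1
    · subst h1; right; exact ⟨rfl, by linarith⟩
    · exfalso
      have h2 : cc * nZ ≤ (x - 1) * nZ :=
        mul_le_mul_of_nonneg_right (by linarith) (by linarith)
      nlinarith
  · rintro (h1 | ⟨rfl, h2⟩)
    · have h2 : (x - 1) * nZ ≤ (cc - 2) * nZ :=
        mul_le_mul_of_nonneg_right (by linarith) (by linarith)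
      nlinarith
    · linarith

lemma not_twisted (n : ℕ) (m' : ℕ∞) (a' b' : Fin (n+1)) (k : ℤ) (ν : X n)
    (h : b' ≠ Fin.last n) : ¬ IsTwisted n m' a' b' k ν := fun hT => h hT.1

lemma isTwisted_iff (n m : ℕ) (a' b' : Fin (n+1)) (k : ℤ) (ν : X n) :
    IsTwisted n (m : ℕ∞) a' b' k ν ↔
      (b' = Fin.last n ∧ 1 ≤ k - pairX n a' b' ν ∧
        (k - pairX n a' b' ν - 1) * (n:ℤ) + ((a':ℕ) + 1) ≤ (m:ℤ)) := by
  unfold IsTwisted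
  refine and_congr_right fun _ => and_congr_right fun h2 => ?_
  rw [Nat.cast_le]
  have h0 : ((k - pairX n a' b' ν - 1).toNat : ℤ) = k - pairX n a' b' ν - 1 :=
    Int.toNat_of_nonneg (by omega)
  constructor
  · intro h3
    have := (Int.ofNat_le.mpr h3)
    push_cast at this
    rw [h0] at this
    linarith
  · intro h3
    have : (((k - pairX n a' b' ν - 1).toNat * n + (a':ℕ) + 1 : ℕ) : ℤ) ≤ (m:ℤ) := by
      push_cast
      rw [h0]
      linarith
    exact_mod_cast this

lemma twist_char (n m : ℕ) (a' : Fin (n+1)) (ha' : (a':ℕ) < n)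
    (c : ℤ) (aa : ℕ) (haa : aa < n) (hc : 1 ≤ c)
    (hm : (m:ℤ) = (c-1)*(n:ℤ) + (aa:ℤ)) (k : ℤ) (ν : X n) :
    IsTwisted n (m:ℕ∞) a' (Fin.last n) k ν ↔
      (1 ≤ k - pairX n a' (Fin.last n) ν ∧
        (k - pairX n a' (Fin.last n) ν < c ∨
         (k - pairX n a' (Fin.last n) ν = c ∧ ((a':ℕ):ℤ) + 1 ≤ (aa:ℤ)))) := by
  rw [isTwisted_iff n m]
  rw [hm]
  rw [height_le (n:ℤ) _ c ((a':ℕ)+1) (aa:ℤ) (by omega) (by exact_mod_cast Nat.succ_le_of_lt ha') (by omega) (by exact_mod_cast haa)]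
  simp only [eq_self_iff_true, true_and]


lemma hsumroot (n : ℕ) (x y : Fin (n+1)) : ∑ i, posRootV n x y i = 0 := by
  simp [posRootV, Pi.single_apply, Finset.sum_sub_distrib]

lemma root_smul_inj (n : ℕ) (a b a' b' : Fin (n+1)) (k e : ℤ)
    (hab : a < b) (hab' : a' < b') (hk : k ≠ 0) (he : e ≠ 0)
    (h : k • posRootX n a b = e • posRootX n a' b') : a = a' ∧ b = b' ∧ k = e := by
  have h0 : toX n (k • posRootV n a b - e • posRootV n a' b') = 0 := by
    rw [map_sub, map_zsmul, map_zsmul]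
    show k • posRootX n a b - e • posRootX n a' b' = 0
    rw [h, sub_self]
  have h' : (k • posRootV n a b) - (e • posRootV n a' b') ∈ lineZ n :=
    (QuotientAddGroup.eq_zero_iff _).mp h0
  rw [lineZ, AddSubgroup.mem_zmultiples_iff] at h'
  obtain ⟨r, hr⟩ := h'
  have hr0 : r = 0 := by
    have h1 : ∑ i, (r • onesV n) i = ∑ i, (k • posRootV n a b - e • posRootV n a' b') i := by
      rw [hr]
    simp [onesV, Finset.sum_sub_distrib, ← Finset.mul_sum, hsumroot, Pi.smul_apply,
      smul_eq_mul] at h1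
    omega
  rw [hr0, zero_smul] at hr
  have hfe : e • posRootV n a' b' = k • posRootV n a b := (sub_eq_zero.mp hr.symm).symm
  have hco : ∀ i : Fin (n+1), e * ((if (i:ℕ) = (a':ℕ) then (1:ℤ) else 0) - (if (i:ℕ) = (b':ℕ) then 1 else 0))
      = k * ((if (i:ℕ) = (a:ℕ) then (1:ℤ) else 0) - (if (i:ℕ) = (b:ℕ) then 1 else 0)) := by
    intro i
    have h2 := congrFun hfe i
    simpa [posRootV, Pi.single_apply, Fin.ext_iff] using h2
  have h1 := hco a
  have h2 := hco b
  have hab2 : (a:ℕ) < (b:ℕ) := hab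
  have hab2' : (a':ℕ) < (b':ℕ) := hab'
  clear h hfe hco h0 hr
  have key : (a:ℕ) = (a':ℕ) ∧ (b:ℕ) = (b':ℕ) ∧ k = e := by
    split_ifs at h1 h2 <;> omega
  exact ⟨Fin.ext key.1, Fin.ext key.2.1, key.2.2⟩

def Fmap (n : ℕ) (a : Fin (n+1)) (p : (Fin (n+1) × Fin (n+1)) × ℤ) :
    (Fin (n+1) × Fin (n+1)) × ℤ :=
  if p.1.1 = a then
    (if p.1.2 = Fin.last n then ((a, Fin.last n), -p.2) else ((p.1.2, Fin.last n), -p.2))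
  else if p.1.2 = Fin.last n then
    (if p.1.1 < a then ((p.1.1, a), p.2) else ((a, p.1.1), -p.2))
  else if p.1.2 = a then ((p.1.1, Fin.last n), p.2)
  else p

lemma Fmap_valid (n : ℕ) (a : Fin (n+1)) (ha : a < Fin.last n)
    (p : (Fin (n+1) × Fin (n+1)) × ℤ) (h1 : p.1.1 < p.1.2) (h2 : p.2 ≠ 0) :
    (Fmap n a p).1.1 < (Fmap n a p).1.2 ∧ (Fmap n a p).2 ≠ 0 := by
  obtain ⟨⟨a', b'⟩, k⟩ := p
  simp only [Fmap]
  split_ifs with h3 h4 h5 h6 h7 <;> simp only [neg_ne_zero]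
  · exact ⟨ha, h2⟩
  · exact ⟨lt_of_le_of_ne (Fin.le_last b') h4, h2⟩
  · exact ⟨h6, h2⟩
  · exact ⟨lt_of_le_of_ne (not_lt.mp h6) (Ne.symm h3), h2⟩
  · exact ⟨lt_trans (h7 ▸ h1) ha, h2⟩
  · exact ⟨h1, h2⟩

lemma Fmap_invol (n : ℕ) (a : Fin (n+1)) (ha : a < Fin.last n)
    (p : (Fin (n+1) × Fin (n+1)) × ℤ) (h1 : p.1.1 < p.1.2) :
    Fmap n a (Fmap n a p) = p := by
  obtain ⟨⟨a', b'⟩, k⟩ := p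
  simp only at h1
  have hane : a ≠ Fin.last n := ne_of_lt ha
  by_cases h3 : a' = a
  · subst h3
    by_cases h4 : b' = Fin.last n
    · subst h4; simp [Fmap]
    · simp [Fmap, h4, ne_of_gt h1, not_lt.mpr h1.le]
  · by_cases h4 : b' = Fin.last n
    · subst h4
      by_cases h6 : a' < a
      · simp [Fmap, h3, hane, h6]
      · simp [Fmap, h3, h6, ne_of_lt h1]
    · by_cases h7 : b' = a
      · subst h7; simp [Fmap, hane, ne_of_lt h1, h1]
      · simp [Fmap, h3, h4, h7]

lemma dirToward_nonlast (n : ℕ) (m' : ℕ∞) (x y : Fin (n+1)) (k : ℤ) (ν : X n)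
    (h : y ≠ Fin.last n) :
    dirToward n m' x y k ν ↔
      ((0 < k ∧ k ≤ pairX n x y ν) ∨ (k < 0 ∧ pairX n x y ν < k)) := by
  unfold dirToward
  have hB := not_twisted n m' x y k ν h
  unfold edgeToward
  constructor
  · rintro (⟨hA, -⟩ | ⟨hT, -⟩)
    · exact hA
    · exact absurd hT hB
  · intro hA
    exact Or.inl ⟨hA, hB⟩

lemma dirToward_last (n m : ℕ) (x : Fin (n+1)) (hx : (x:ℕ) < n)
    (c : ℤ) (aa : ℕ) (haa : aa < n) (hc : 1 ≤ c)
    (hm : (m:ℤ) = (c-1)*(n:ℤ) + (aa:ℤ)) (k : ℤ) (ν : X n) :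
    dirToward n (m:ℕ∞) x (Fin.last n) k ν ↔
      Xor' ((0 < k ∧ k ≤ pairX n x (Fin.last n) ν) ∨
            (k < 0 ∧ pairX n x (Fin.last n) ν < k))
           (1 ≤ k - pairX n x (Fin.last n) ν ∧
            (k - pairX n x (Fin.last n) ν < c ∨
             (k - pairX n x (Fin.last n) ν = c ∧ ((x:ℕ):ℤ) + 1 ≤ (aa:ℤ)))) := by
  unfold dirToward edgeToward
  rw [twist_char n m x hx c aa haa hc hm k ν]

lemma pairSet_finite (n m : ℕ) (hn : 1 ≤ n) (ν : X n) :
    {p : (Fin (n + 1) × Fin (n + 1)) × ℤ | p.1.1 < p.1.2 ∧ p.2 ≠ 0 ∧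
      dirToward n (m : ℕ∞) p.1.1 p.1.2 p.2 ν}.Finite := by
  apply Set.Finite.subset
    (Set.finite_iUnion (fun q : Fin (n+1) × Fin (n+1) =>
      ((Set.finite_singleton q).prod
        (Set.finite_Icc (-(|pairX n q.1 q.2 ν| + m + 1)) (|pairX n q.1 q.2 ν| + m + 1)))))
  rintro ⟨⟨x, y⟩, k⟩ ⟨-, -, hd⟩
  dsimp only at hd
  simp only [Set.mem_iUnion]
  refine ⟨(x, y), Set.mem_prod.mpr ⟨rfl, Set.mem_Icc.mpr ?_⟩⟩
  simp only
  set P : ℤ := pairX n x y ν with hP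
  have habs1 : P ≤ |P| := le_abs_self P
  have habs2 : -P ≤ |P| := by have := neg_abs_le P; linarith
  rcases hd with ⟨hE, -⟩ | ⟨hT, -⟩
  · rcases hE with ⟨hk, hkP⟩ | ⟨hk, hkP⟩
    · constructor <;> push_cast <;> linarith
    · constructor <;> push_cast <;> linarith
  · obtain ⟨-, h2, h3⟩ := hT
    rw [Nat.cast_le] at h3
    set tt : ℕ := (k - P - 1).toNat with htt
    have ht1 : tt ≤ tt * n := Nat.le_mul_of_pos_right tt (by omega)
    have ht2 : tt * n ≤ m := by
      calc tt * n ≤ tt * n + ((x:ℕ) + 1) := Nat.le_add_right _ _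
        _ = tt * n + (x:ℕ) + 1 := by omega
        _ ≤ m := h3
    have ht3 : tt ≤ m := le_trans ht1 ht2
    have ht4 : (tt : ℤ) = k - P - 1 := Int.toNat_of_nonneg (by omega)
    have ht5 : (tt : ℤ) ≤ (m : ℤ) := by exact_mod_cast ht3
    constructor <;> push_cast <;> linarith

lemma pairX_trans (n : ℕ) (x y z : Fin (n+1)) (ν : X n) :
    pairX n x y ν + pairX n y z ν = pairX n x z ν := by
  induction ν using QuotientAddGroup.induction_on with
  | H v =>
    show pairV n x y v + pairV n y z v = pairV n x z v
    simp [pairV]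

/-- let `t = t_{m+1} = r_{α_{j,n},c}` with `(c−1)·n + j = m + 1` and let
`μ` satisfy `μ ≠ t(μ)` with the untwisted Bruhat edge between `μ` and `t(μ)` directed
toward `t(μ)`.  Then `ν ↦ t(ν)` is a bijection from the in-neighbors of `μ` in `Γ^m`
onto the in-neighbors of `t(μ)` in `Γ^m` with `μ` removed; in particular,
`Arr_m(μ) + 1 = Arr_m(t(μ))`. -/
theorem statement8 (n m : ℕ) (hn : 2 ≤ n)
    (a : Fin (n + 1)) (c : ℤ) (ha : (a : ℕ) < n) (hc : 1 ≤ c)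
    (hidx : (c - 1) * (n : ℤ) + ((a : ℕ) + 1) = (m : ℤ) + 1)
    (t : X n → X n) (htdef : t = areflect n a (Fin.last n) c)
    (μ : X n) (hne : μ ≠ t μ)
    (hdir : EdgeDirToward n 0 μ (t μ)) :
    Set.BijOn t {ν | EdgeDirToward n (m : ℕ∞) ν μ}
      ({ν | EdgeDirToward n (m : ℕ∞) ν (t μ)} \ {μ}) ∧
    Arr n (m : ℕ∞) μ + 1 = Arr n (m : ℕ∞) (t μ) := by
  subst htdef
  have hnn : 1 ≤ n := by omega
  have hvlast : ((Fin.last n : Fin (n+1)) : ℕ) = n := Fin.val_last n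
  have halN : a < Fin.last n := by rw [Fin.lt_def, hvlast]; exact ha
  have hane : a ≠ Fin.last n := ne_of_lt halN
  have hm : (m:ℤ) = (c-1)*(n:ℤ) + ((a:ℕ):ℤ) := by linarith
  have hβ2 : pairX n a (Fin.last n) (posRootX n a (Fin.last n)) = 2 := by
    rw [pairX_posRootX, hvlast]; split_ifs <;> omega
  have htmu : areflect n a (Fin.last n) c μ
      = μ - (c + pairX n a (Fin.last n) μ) • posRootX n a (Fin.last n) := rfl
  rw [htmu] at hne hdir ⊢
  have hT0 : ∀ (x y : Fin (n+1)) (k : ℤ) (ν : X n), ¬ IsTwisted n 0 x y k ν := by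
    rintro x y k ν ⟨-, -, h3⟩
    have h4 : ((k - pairX n x y ν - 1).toNat * n + (x:ℕ) + 1 : ℕ) = 0 := by
      exact_mod_cast le_antisymm h3 zero_le
    omega
  have hD0 : c + pairX n a (Fin.last n) μ ≠ 0 := by
    intro h
    apply hne
    rw [h, zero_zsmul, sub_zero]
  -- extract from hdir that 1 ≤ c + ⟨μ,β⟩
  have hd1 : 1 ≤ c + pairX n a (Fin.last n) μ := by
    obtain ⟨x, y, hxy, k', hk', hμeq, hdir2⟩ := hdir
    have h6 : k' • posRootX n x y
        = (-(c + pairX n a (Fin.last n) μ)) • posRootX n a (Fin.last n) := by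
      have h9 : (μ - (c + pairX n a (Fin.last n) μ) • posRootX n a (Fin.last n))
            - k' • posRootX n x y
          = (μ - (c + pairX n a (Fin.last n) μ) • posRootX n a (Fin.last n))
            - (-(c + pairX n a (Fin.last n) μ)) • posRootX n a (Fin.last n) := by
        rw [← hμeq]; module
      exact sub_right_injective h9
    obtain ⟨rfl, rfl, rfl⟩ := root_smul_inj n x y a (Fin.last n) k'
      (-(c + pairX n a (Fin.last n) μ)) hxy halN hk' (neg_ne_zero.mpr hD0) h6
    rcases hdir2 with ⟨hE, -⟩ | ⟨hT, -⟩
    · unfold edgeToward at hE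
      rw [pairX_sub_smul, hβ2] at hE
      rcases hE with ⟨h7, h8⟩ | ⟨h7, h8⟩ <;> omega
    · exact absurd hT (hT0 _ _ _ _)
  -- key directedness facts for the reflection edge
  have hNotMu : ¬ dirToward n (m:ℕ∞) a (Fin.last n)
      (c + pairX n a (Fin.last n) μ) μ := by
    rw [dirToward_last n m a ha c (a:ℕ) ha hc hm]
    unfold Xor' Xor
    omega
  have hMuEdge : dirToward n (m:ℕ∞) a (Fin.last n)
      (-(c + pairX n a (Fin.last n) μ))
      (μ - (c + pairX n a (Fin.last n) μ) • posRootX n a (Fin.last n)) := by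
    rw [dirToward_last n m a ha c (a:ℕ) ha hc hm, pairX_sub_smul, hβ2]
    unfold Xor' Xor
    omega
  -- the master lemma
  have hMain : ∀ (a' b' : Fin (n+1)) (k : ℤ), a' < b' → k ≠ 0 →
      ¬(a' = a ∧ b' = Fin.last n ∧ k = c + pairX n a (Fin.last n) μ) →
      areflect n a (Fin.last n) c (μ - k • posRootX n a' b')
        = (μ - (c + pairX n a (Fin.last n) μ) • posRootX n a (Fin.last n))
          - (Fmap n a ((a', b'), k)).2 •
            posRootX n (Fmap n a ((a', b'), k)).1.1 (Fmap n a ((a', b'), k)).1.2 ∧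
      (dirToward n (m:ℕ∞) a' b' k μ ↔
        dirToward n (m:ℕ∞) (Fmap n a ((a', b'), k)).1.1 (Fmap n a ((a', b'), k)).1.2
          (Fmap n a ((a', b'), k)).2
          (μ - (c + pairX n a (Fin.last n) μ) • posRootX n a (Fin.last n))) := by
    intro a' b' k hab' hk hbad
    by_cases h3 : a' = a
    · subst h3
      by_cases h4 : b' = Fin.last n
      · subst h4
        -- B1 : the reflection root
        have hFm : Fmap n a' ((a', Fin.last n), k) = ((a', Fin.last n), -k) := by
          simp [Fmap]
        rw [hFm]
        dsimp only
        have hkD : k ≠ c + pairX n a' (Fin.last n) μ := fun h => hbad ⟨rfl, rfl, h⟩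
        constructor
        · show (μ - k • posRootX n a' (Fin.last n))
              - (c + pairX n a' (Fin.last n) (μ - k • posRootX n a' (Fin.last n)))
                • posRootX n a' (Fin.last n) = _
          rw [pairX_sub_smul, hβ2]
          module
        · rw [dirToward_last n m a' ha c (a':ℕ) ha hc hm k μ,
            dirToward_last n m a' ha c (a':ℕ) ha hc hm (-k) _,
            pairX_sub_smul, hβ2]
          unfold Xor' Xor
          omega
      · -- B2 : root (a, b') with a < b' < n
        have hab'n : (a':ℕ) < (b':ℕ) := hab'
        have hb'n : (b':ℕ) < n :=
          lt_of_le_of_ne (Fin.is_le b') (fun h => h4 (Fin.ext (by rw [hvlast]; exact h)))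
        have hFm : Fmap n a' ((a', b'), k) = ((b', Fin.last n), -k) := by
          simp [Fmap, h4]
        rw [hFm]
        dsimp only
        have hv1 : pairX n a' (Fin.last n) (posRootX n a' b') = 1 := by
          rw [pairX_posRootX, hvlast]; split_ifs <;> omega
        have hv2 : pairX n b' (Fin.last n) (posRootX n a' (Fin.last n)) = 1 := by
          rw [pairX_posRootX, hvlast]; split_ifs <;> omega
        have hrel := pairX_trans n a' b' (Fin.last n) μ
        constructor
        · show (μ - k • posRootX n a' b')
              - (c + pairX n a' (Fin.last n) (μ - k • posRootX n a' b'))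
                • posRootX n a' (Fin.last n) = _
          rw [pairX_sub_smul, hv1, ← posRootX_add n a' b' (Fin.last n)]
          module
        · rw [dirToward_nonlast n (m:ℕ∞) a' b' k μ h4,
            dirToward_last n m b' hb'n c (a':ℕ) ha hc hm (-k) _,
            pairX_sub_smul, hv2]
          unfold Xor' Xor
          omega
    · by_cases h4 : b' = Fin.last n
      · subst h4
        have ha'n : (a':ℕ) < n := by
          have : (a':ℕ) < ((Fin.last n : Fin (n+1)):ℕ) := hab'
          omega
        by_cases h6 : a' < a
        · -- B3 : root (a', last) with a' < a
          have ha'a : (a':ℕ) < (a:ℕ) := h6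
          have hFm : Fmap n a ((a', Fin.last n), k) = ((a', a), k) := by
            simp [Fmap, h3, h6]
          rw [hFm]
          dsimp only
          have hv1 : pairX n a (Fin.last n) (posRootX n a' (Fin.last n)) = 1 := by
            rw [pairX_posRootX, hvlast]; split_ifs <;> omega
          have hv2 : pairX n a' a (posRootX n a (Fin.last n)) = -1 := by
            rw [pairX_posRootX, hvlast]; split_ifs <;> omega
          have hrel := pairX_trans n a' a (Fin.last n) μ
          constructor
          · show (μ - k • posRootX n a' (Fin.last n))
                - (c + pairX n a (Fin.last n) (μ - k • posRootX n a' (Fin.last n)))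
                  • posRootX n a (Fin.last n) = _
            rw [pairX_sub_smul, hv1, ← posRootX_add n a' a (Fin.last n)]
            module
          · rw [dirToward_last n m a' ha'n c (a:ℕ) ha hc hm k μ,
              dirToward_nonlast n (m:ℕ∞) a' a k _ hane,
              pairX_sub_smul, hv2]
            unfold Xor' Xor
            omega
        · -- B4 : root (a', last) with a < a'
          have haa' : (a:ℕ) < (a':ℕ) :=
            lt_of_le_of_ne (by exact_mod_cast not_lt.mp h6)
              (fun h => h3 (Fin.ext h.symm))
          have ha'lt : a' < Fin.last n := by rw [Fin.lt_def, hvlast]; exact ha'n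
          have hFm : Fmap n a ((a', Fin.last n), k) = ((a, a'), -k) := by
            simp [Fmap, h3, h6]
          rw [hFm]
          dsimp only
          have hv1 : pairX n a (Fin.last n) (posRootX n a' (Fin.last n)) = 1 := by
            rw [pairX_posRootX, hvlast]; split_ifs <;> omega
          have hv2 : pairX n a a' (posRootX n a (Fin.last n)) = 1 := by
            rw [pairX_posRootX, hvlast]; split_ifs <;> omega
          have hrel := pairX_trans n a a' (Fin.last n) μ
          constructor
          · show (μ - k • posRootX n a' (Fin.last n))
                - (c + pairX n a (Fin.last n) (μ - k • posRootX n a' (Fin.last n)))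
                  • posRootX n a (Fin.last n) = _
            rw [pairX_sub_smul, hv1, ← posRootX_add n a a' (Fin.last n)]
            module
          · rw [dirToward_last n m a' ha'n c (a:ℕ) ha hc hm k μ,
              dirToward_nonlast n (m:ℕ∞) a a' (-k) _ (ne_of_lt ha'lt),
              pairX_sub_smul, hv2]
            unfold Xor' Xor
            omega
      · by_cases h7 : b' = a
        · subst h7
          -- B5 : root (a', a) with a' < a
          have ha'a : (a':ℕ) < (b':ℕ) := hab'
          have ha'n : (a':ℕ) < n := by omega
          have hFm : Fmap n b' ((a', b'), k) = ((a', Fin.last n), k) := by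
            simp [Fmap, hane, ne_of_lt hab', hab']
          rw [hFm]
          dsimp only
          have hv1 : pairX n b' (Fin.last n) (posRootX n a' b') = -1 := by
            rw [pairX_posRootX, hvlast]; split_ifs <;> omega
          have hv2 : pairX n a' (Fin.last n) (posRootX n b' (Fin.last n)) = 1 := by
            rw [pairX_posRootX, hvlast]; split_ifs <;> omega
          have hrel := pairX_trans n a' b' (Fin.last n) μ
          constructor
          · show (μ - k • posRootX n a' b')
                - (c + pairX n b' (Fin.last n) (μ - k • posRootX n a' b'))
                  • posRootX n b' (Fin.last n) = _
            rw [pairX_sub_smul, hv1, ← posRootX_add n a' b' (Fin.last n)]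
            module
          · rw [dirToward_nonlast n (m:ℕ∞) a' b' k μ hane,
              dirToward_last n m a' ha'n c (b':ℕ) ha hc hm k _,
              pairX_sub_smul, hv2]
            unfold Xor' Xor
            omega
        · -- B6 : root untouched by the reflection
          have hab'n : (a':ℕ) < (b':ℕ) := hab'
          have hb'n : (b':ℕ) < n :=
            lt_of_le_of_ne (Fin.is_le b') (fun h => h4 (Fin.ext (by rw [hvlast]; exact h)))
          have ha'na : (a':ℕ) ≠ (a:ℕ) := fun h => h3 (Fin.ext h)
          have hb'na : (b':ℕ) ≠ (a:ℕ) := fun h => h7 (Fin.ext h)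
          have hFm : Fmap n a ((a', b'), k) = ((a', b'), k) := by
            simp [Fmap, h3, h4, h7]
          rw [hFm]
          dsimp only
          have hv1 : pairX n a (Fin.last n) (posRootX n a' b') = 0 := by
            rw [pairX_posRootX, hvlast]; split_ifs <;> omega
          have hv2 : pairX n a' b' (posRootX n a (Fin.last n)) = 0 := by
            rw [pairX_posRootX, hvlast]; split_ifs <;> omega
          constructor
          · show (μ - k • posRootX n a' b')
                - (c + pairX n a (Fin.last n) (μ - k • posRootX n a' b'))
                  • posRootX n a (Fin.last n) = _
            rw [pairX_sub_smul, hv1]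
            module
          · rw [dirToward_nonlast n (m:ℕ∞) a' b' k μ h4,
              dirToward_nonlast n (m:ℕ∞) a' b' k _ h4,
              pairX_sub_smul, hv2]
            omega
  -- involution of the reflection
  have hinv : ∀ ν, areflect n a (Fin.last n) c (areflect n a (Fin.last n) c ν) = ν := by
    intro ν
    show (ν - (c + pairX n a (Fin.last n) ν) • posRootX n a (Fin.last n))
        - (c + pairX n a (Fin.last n)
            (ν - (c + pairX n a (Fin.last n) ν) • posRootX n a (Fin.last n)))
          • posRootX n a (Fin.last n) = ν
    rw [pairX_sub_smul, hβ2]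
    module
  constructor
  · refine ⟨?_, ?_, ?_⟩
    · -- MapsTo
      rintro ν ⟨a', b', hab', k, hk, rfl, hdirk⟩
      have hbad : ¬(a' = a ∧ b' = Fin.last n ∧ k = (c + pairX n a (Fin.last n) μ)) := by
        rintro ⟨rfl, rfl, rfl⟩; exact hNotMu hdirk
      obtain ⟨hid, hiff⟩ := hMain a' b' k hab' hk hbad
      obtain ⟨hv1, hv2⟩ := Fmap_valid n a halN ((a', b'), k) hab' hk
      refine ⟨⟨_, _, hv1, _, hv2, hid, hiff.mp hdirk⟩, ?_⟩
      intro hμ'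
      rw [Set.mem_singleton_iff] at hμ'
      have h9 : (μ - (c + pairX n a (Fin.last n) μ) • posRootX n a (Fin.last n)) - (Fmap n a ((a', b'), k)).2 •
            posRootX n (Fmap n a ((a', b'), k)).1.1 (Fmap n a ((a', b'), k)).1.2
          = (μ - (c + pairX n a (Fin.last n) μ) • posRootX n a (Fin.last n)) - (-(c + pairX n a (Fin.last n) μ)) • posRootX n a (Fin.last n) := by
        rw [← hid, hμ']
        module
      have h10 := sub_right_injective h9
      obtain ⟨e1, e2, e3⟩ := root_smul_inj n _ _ a (Fin.last n) _ (-(c + pairX n a (Fin.last n) μ))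
        hv1 halN hv2 (neg_ne_zero.mpr hD0) h10
      have h11 : Fmap n a ((a', b'), k) = ((a, Fin.last n), -(c + pairX n a (Fin.last n) μ)) := by
        rw [Prod.ext_iff, Prod.ext_iff]; exact ⟨⟨e1, e2⟩, e3⟩
      have h12 := Fmap_invol n a halN ((a', b'), k) hab'
      rw [h11] at h12
      have h13 : Fmap n a ((a, Fin.last n), -(c + pairX n a (Fin.last n) μ)) = ((a, Fin.last n), (c + pairX n a (Fin.last n) μ)) := by
        simp [Fmap]
      rw [h13] at h12
      apply hbad
      rw [Prod.ext_iff, Prod.ext_iff] at h12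
      exact ⟨h12.1.1.symm, h12.1.2.symm, h12.2.symm⟩
    · -- InjOn
      intro x hx y hy hxy
      have h14 := congrArg (areflect n a (Fin.last n) c) hxy
      rwa [hinv, hinv] at h14
    · -- SurjOn
      rintro ν' ⟨⟨x2, y2, hxy2, k2, hk2, hq, hdirq⟩, hνμ⟩
      have hqbad : ¬(x2 = a ∧ y2 = Fin.last n ∧ k2 = -(c + pairX n a (Fin.last n) μ)) := by
        rintro ⟨rfl, rfl, rfl⟩
        apply hνμ
        rw [Set.mem_singleton_iff, hq]
        module
      rcases hFm : Fmap n a ((x2, y2), k2) with ⟨⟨pa, pb⟩, pk⟩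
      have hval := Fmap_valid n a halN ((x2, y2), k2) hxy2 hk2
      rw [hFm] at hval
      obtain ⟨hpv1, hpv2⟩ := hval
      dsimp only at hpv1 hpv2
      have hpbad : ¬(pa = a ∧ pb = Fin.last n ∧ pk = (c + pairX n a (Fin.last n) μ)) := by
        rintro ⟨e1, e2, e3⟩
        have h21 := Fmap_invol n a halN ((x2, y2), k2) hxy2
        rw [hFm] at h21
        have h23 : Fmap n a ((pa, pb), pk) = ((a, Fin.last n), -(c + pairX n a (Fin.last n) μ)) := by
          rw [e1, e2, e3]; simp [Fmap]
        rw [h23] at h21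
        rw [Prod.ext_iff, Prod.ext_iff] at h21
        exact hqbad ⟨h21.1.1.symm, h21.1.2.symm, h21.2.symm⟩
      obtain ⟨hid, hiff⟩ := hMain pa pb pk hpv1 hpv2 hpbad
      have h20 : Fmap n a ((pa, pb), pk) = ((x2, y2), k2) := by
        rw [← hFm]; exact Fmap_invol n a halN ((x2, y2), k2) hxy2
      rw [h20] at hid hiff
      dsimp only at hid hiff
      refine ⟨μ - pk • posRootX n pa pb, ⟨pa, pb, hpv1, pk, hpv2, rfl, hiff.mpr hdirq⟩, ?_⟩
      rw [hid, ← hq]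
  · -- counting
    have hfin2 : ({p : (Fin (n+1) × Fin (n+1)) × ℤ | p.1.1 < p.1.2 ∧ p.2 ≠ 0 ∧ dirToward n (m:ℕ∞) p.1.1 p.1.2 p.2 (μ - (c + pairX n a (Fin.last n) μ) • posRootX n a (Fin.last n))}).Finite := pairSet_finite n m hnn _
    have hmemT : ((a, Fin.last n), -(c + pairX n a (Fin.last n) μ)) ∈ {p : (Fin (n+1) × Fin (n+1)) × ℤ | p.1.1 < p.1.2 ∧ p.2 ≠ 0 ∧ dirToward n (m:ℕ∞) p.1.1 p.1.2 p.2 (μ - (c + pairX n a (Fin.last n) μ) • posRootX n a (Fin.last n))} :=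
      ⟨halN, neg_ne_zero.mpr hD0, hMuEdge⟩
    have hbij2 : Set.BijOn (Fmap n a) {p : (Fin (n+1) × Fin (n+1)) × ℤ | p.1.1 < p.1.2 ∧ p.2 ≠ 0 ∧ dirToward n (m:ℕ∞) p.1.1 p.1.2 p.2 μ}
        (({p : (Fin (n+1) × Fin (n+1)) × ℤ | p.1.1 < p.1.2 ∧ p.2 ≠ 0 ∧ dirToward n (m:ℕ∞) p.1.1 p.1.2 p.2 (μ - (c + pairX n a (Fin.last n) μ) • posRootX n a (Fin.last n))}) \ {((a, Fin.last n), -(c + pairX n a (Fin.last n) μ))}) := by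
      refine ⟨?_, ?_, ?_⟩
      · rintro ⟨⟨pa, pb⟩, pk⟩ ⟨h1, h2, h3⟩
        dsimp only at h1 h2 h3
        have hbad : ¬(pa = a ∧ pb = Fin.last n ∧ pk = (c + pairX n a (Fin.last n) μ)) := by
          rintro ⟨rfl, rfl, rfl⟩; exact hNotMu h3
        obtain ⟨hid, hiff⟩ := hMain pa pb pk h1 h2 hbad
        obtain ⟨hv1, hv2⟩ := Fmap_valid n a halN ((pa, pb), pk) h1 h2
        refine ⟨⟨hv1, hv2, hiff.mp h3⟩, ?_⟩
        intro hbadm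
        rw [Set.mem_singleton_iff] at hbadm
        have h12 := Fmap_invol n a halN ((pa, pb), pk) h1
        rw [hbadm] at h12
        have h13 : Fmap n a ((a, Fin.last n), -(c + pairX n a (Fin.last n) μ)) = ((a, Fin.last n), (c + pairX n a (Fin.last n) μ)) := by
          simp [Fmap]
        rw [h13] at h12
        rw [Prod.ext_iff, Prod.ext_iff] at h12
        exact hbad ⟨h12.1.1.symm, h12.1.2.symm, h12.2.symm⟩
      · intro x hx y hy hxy
        have h14 := congrArg (Fmap n a) hxy
        rwa [Fmap_invol n a halN x hx.1, Fmap_invol n a halN y hy.1] at h14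
      · rintro ⟨⟨x2, y2⟩, k2⟩ ⟨⟨h1, h2, h3⟩, hnb⟩
        dsimp only at h1 h2 h3
        have hqbad : ¬(x2 = a ∧ y2 = Fin.last n ∧ k2 = -(c + pairX n a (Fin.last n) μ)) := by
          rintro ⟨rfl, rfl, rfl⟩
          exact hnb rfl
        rcases hFm : Fmap n a ((x2, y2), k2) with ⟨⟨pa, pb⟩, pk⟩
        have hval := Fmap_valid n a halN ((x2, y2), k2) h1 h2
        rw [hFm] at hval
        obtain ⟨hpv1, hpv2⟩ := hval
        dsimp only at hpv1 hpv2
        have hpbad : ¬(pa = a ∧ pb = Fin.last n ∧ pk = (c + pairX n a (Fin.last n) μ)) := by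
          rintro ⟨e1, e2, e3⟩
          have h21 := Fmap_invol n a halN ((x2, y2), k2) h1
          rw [hFm] at h21
          have h23 : Fmap n a ((pa, pb), pk) = ((a, Fin.last n), -(c + pairX n a (Fin.last n) μ)) := by
            rw [e1, e2, e3]; simp [Fmap]
          rw [h23] at h21
          rw [Prod.ext_iff, Prod.ext_iff] at h21
          exact hqbad ⟨h21.1.1.symm, h21.1.2.symm, h21.2.symm⟩
        obtain ⟨hid, hiff⟩ := hMain pa pb pk hpv1 hpv2 hpbad
        have h20 : Fmap n a ((pa, pb), pk) = ((x2, y2), k2) := by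
          rw [← hFm]; exact Fmap_invol n a halN ((x2, y2), k2) h1
        rw [h20] at hiff
        dsimp only at hiff
        exact ⟨((pa, pb), pk), ⟨hpv1, hpv2, hiff.mpr h3⟩, h20⟩
    have h32 : ({p : (Fin (n+1) × Fin (n+1)) × ℤ | p.1.1 < p.1.2 ∧ p.2 ≠ 0 ∧ dirToward n (m:ℕ∞) p.1.1 p.1.2 p.2 μ}).ncard = (({p : (Fin (n+1) × Fin (n+1)) × ℤ | p.1.1 < p.1.2 ∧ p.2 ≠ 0 ∧ dirToward n (m:ℕ∞) p.1.1 p.1.2 p.2 (μ - (c + pairX n a (Fin.last n) μ) • posRootX n a (Fin.last n))}) \ {((a, Fin.last n), -(c + pairX n a (Fin.last n) μ))}).ncard := by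
      rw [← Set.BijOn.image_eq hbij2, Set.ncard_image_of_injOn hbij2.injOn]
    have h33 := Set.ncard_diff_singleton_of_mem hmemT
    have h34 : 0 < ({p : (Fin (n+1) × Fin (n+1)) × ℤ | p.1.1 < p.1.2 ∧ p.2 ≠ 0 ∧ dirToward n (m:ℕ∞) p.1.1 p.1.2 p.2 (μ - (c + pairX n a (Fin.last n) μ) • posRootX n a (Fin.last n))}).ncard := (Set.ncard_pos hfin2).mpr ⟨_, hmemT⟩
    show ({p : (Fin (n+1) × Fin (n+1)) × ℤ | p.1.1 < p.1.2 ∧ p.2 ≠ 0 ∧ dirToward n (m:ℕ∞) p.1.1 p.1.2 p.2 μ}).ncard + 1 = ({p : (Fin (n+1) × Fin (n+1)) × ℤ | p.1.1 < p.1.2 ∧ p.2 ≠ 0 ∧ dirToward n (m:ℕ∞) p.1.1 p.1.2 p.2 (μ - (c + pairX n a (Fin.last n) μ) • posRootX n a (Fin.last n))}).ncard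
    omega
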